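/- Let n ≥ 1 and let q_0, q_1, …, q_n be positive integers forming a well-formed weight, meaning that for every index j the greatest common divisor of the set {q_i : i ≠ j} equals 1. In ℚ^n, let v_1, …, v_n be the standard basis vectors, let v_0 = −(v_1 + … + v_n), and set e_i = (1/q_i)·v_i for i = 0, …, n. Let N be the subgroup of ℚ^n generated by e_0, …, e_n, and for a positive integer m let L be the subgroup of N generated by m·v_0, m·v_1, …, m·v_n. Then L has finite index in N, each weight q_i divides the index [N : L], and consequently, if a prime p divides some q_j, then the quotient group N/L contains an element of order p. -/

import Mathlib

/-- Content of Remark 4.9: with `N` the lattice generated by the `e i = v i / q i` and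
`L` the sublattice generated by the balanced contact orders `m • v i`, `L` has finite
index in `N`, each weight `q i` divides the index `[N : L]`, and if a prime `p` divides
some weight then the quotient `N ⧸ L` contains an element of order `p`. -/
theorem stmt9 (n : ℕ) (hn : 1 ≤ n) (q : Fin (n + 1) → ℕ) (hq : ∀ i, 0 < q i)
    (hwf : ∀ j : Fin (n + 1), (Finset.univ.erase j).gcd q = 1)
    (v : Fin (n + 1) → (Fin n → ℚ))
    (hv : ∀ j : Fin n, v j.succ = Pi.single j 1)
    (hv0 : v 0 = -∑ j : Fin n, Pi.single j 1)
    (e : Fin (n + 1) → (Fin n → ℚ)) (he : ∀ i, e i = (q i : ℚ)⁻¹ • v i)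
    (m : ℕ) (hm : 0 < m)
    (N : AddSubgroup (Fin n → ℚ)) (hN : N = AddSubgroup.closure (Set.range e))
    (L : AddSubgroup (Fin n → ℚ))
    (hL : L = AddSubgroup.closure (Set.range fun i => (m : ℚ) • v i)) :
    L.relIndex N ≠ 0 ∧ (∀ i, q i ∣ L.relIndex N) ∧
      ∀ p : ℕ, p.Prime → (∃ j, p ∣ q j) →
        ∃ x : N ⧸ L.addSubgroupOf N, addOrderOf x = p := by
  have hq0 : ∀ i, (q i : ℚ) ≠ 0 := fun i => Nat.cast_ne_zero.mpr (hq i).ne'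
  have hm0 : (m : ℚ) ≠ 0 := Nat.cast_ne_zero.mpr hm.ne'
  have heN : ∀ i, e i ∈ N := fun i => hN ▸ AddSubgroup.subset_closure ⟨i, rfl⟩
  have hmvL : ∀ i, (m : ℚ) • v i ∈ L := fun i => hL ▸ AddSubgroup.subset_closure ⟨i, rfl⟩
  have hv0j : ∀ j : Fin n, v 0 j = -1 := by
    intro j
    rw [hv0]
    simp [Finset.sum_apply, Pi.single_apply]
  have hvsj : ∀ (j' j : Fin n), v j'.succ j = if j = j' then 1 else 0 := by
    intro j' j
    rw [hv j']
    simp [Pi.single_apply]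
  have key2 : ∀ i, (m * q i) • e i ∈ L := by
    intro i
    have h1 : ((m * q i : ℕ) : ℚ) • e i = (m : ℚ) • v i := by
      rw [he i, smul_smul]
      congr 1
      push_cast
      rw [mul_assoc, mul_inv_cancel₀ (hq0 i), mul_one]
    rw [← Nat.cast_smul_eq_nsmul ℚ, h1]
    exact hmvL i
  have hLS : L ≤ AddSubgroup.pi Set.univ fun _ : Fin n => AddSubgroup.zmultiples (m : ℚ) := by
    rw [hL, AddSubgroup.closure_le]
    rintro _ ⟨i, rfl⟩
    simp only [SetLike.mem_coe, AddSubgroup.mem_pi]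
    intro j _
    rw [AddSubgroup.mem_zmultiples_iff]
    induction i using Fin.cases with
    | zero => exact ⟨-1, by simp [hv0j j]⟩
    | succ j' =>
        rcases eq_or_ne j j' with h | h
        · exact ⟨1, by simp [hvsj, h]⟩
        · exact ⟨0, by simp [hvsj, h]⟩
  have key1 : ∀ (i) (k : ℕ), k • e i ∈ L → m * q i ∣ k := by
    intro i k hk
    have hk' := (AddSubgroup.mem_pi _).mp (hLS hk)
    obtain ⟨j, ε, hε, hvij⟩ : ∃ (j : Fin n) (ε : ℤ), (ε = 1 ∨ ε = -1) ∧ v i j = ε := by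
      induction i using Fin.cases with
      | zero => exact ⟨⟨0, hn⟩, -1, Or.inr rfl, by rw [hv0j]; norm_num⟩
      | succ j' => exact ⟨j', 1, Or.inl rfl, by rw [hvsj]; simp⟩
    have hcm := hk' j trivial
    rw [AddSubgroup.mem_zmultiples_iff] at hcm
    obtain ⟨c, hc⟩ := hcm
    have hcval : (c : ℚ) * m = (k : ℚ) * ((q i : ℚ)⁻¹ * (ε : ℚ)) := by
      rw [← hvij]
      have : (k • e i) j = (k : ℚ) * ((q i : ℚ)⁻¹ * v i j) := by
        rw [he i]
        simp [mul_comm]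
      rw [← this, ← hc, zsmul_eq_mul]
    have h2 : (k : ℚ) = ((m : ℚ) * (q i : ℚ)) * ((ε : ℚ) * (c : ℚ)) := by
      rcases hε with rfl | rfl <;>
        (push_cast at hcval ⊢; field_simp [hq0 i] at hcval; linarith [hcval])
    have h3 : (k : ℤ) = ((m : ℤ) * (q i : ℤ)) * (ε * c) := by exact_mod_cast h2
    exact Int.natCast_dvd_natCast.mp (by push_cast; exact ⟨ε * c, h3⟩)
  -- the quotient group
  have hsmul : ∀ (i : Fin (n + 1)) (k : ℕ),
      k • (QuotientAddGroup.mk (⟨e i, heN i⟩ : N) : N ⧸ L.addSubgroupOf N) = 0 ↔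
        k • e i ∈ L := by
    intro i k
    rw [← QuotientAddGroup.mk_nsmul, QuotientAddGroup.eq_zero_iff,
      AddSubgroup.mem_addSubgroupOf]
    norm_cast
  -- N is finitely generated
  haveI hNfg : AddGroup.FG N := by
    rw [AddGroup.fg_iff_addSubgroup_fg, AddSubgroup.fg_iff]
    exact ⟨Set.range e, hN.symm, Set.finite_range e⟩
  -- the quotient is torsion
  have htor : AddMonoid.IsTorsion (N ⧸ L.addSubgroupOf N) := by
    intro x
    induction x using QuotientAddGroup.induction_on with
    | H y =>
      refine isOfFinAddOrder_iff_nsmul_eq_zero.mpr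
        ⟨m * ∏ i, q i, Nat.mul_pos hm (Finset.prod_pos fun i _ => hq i), ?_⟩
      rw [← QuotientAddGroup.mk_nsmul, QuotientAddGroup.eq_zero_iff,
        AddSubgroup.mem_addSubgroupOf]
      have hsub : N ≤ L.comap (AddMonoidHom.mk' (fun x : Fin n → ℚ => (m * ∏ i, q i) • x)
          (fun a b => smul_add _ a b)) := by
        rw [hN, AddSubgroup.closure_le]
        rintro _ ⟨i, rfl⟩
        simp only [SetLike.mem_coe, AddSubgroup.mem_comap, AddMonoidHom.mk'_apply]
        obtain ⟨d, hd⟩ : m * q i ∣ m * ∏ i, q i :=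
          mul_dvd_mul_left m (Finset.dvd_prod_of_mem q (Finset.mem_univ i))
        rw [hd, mul_comm (m * q i) d, mul_smul]
        exact AddSubgroup.nsmul_mem L (key2 i) d
      have := hsub y.2
      simpa using this
  haveI hfin : Finite (N ⧸ L.addSubgroupOf N) :=
    AddCommGroup.finite_of_fg_torsion _ htor
  -- orders of the generators
  have horder : ∀ i, addOrderOf
      (QuotientAddGroup.mk (⟨e i, heN i⟩ : N) : N ⧸ L.addSubgroupOf N) = m * q i := by
    intro i
    refine Nat.dvd_antisymm (addOrderOf_dvd_of_nsmul_eq_zero ((hsmul i _).mpr (key2 i))) ?_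
    exact key1 i _ ((hsmul i _).mp (addOrderOf_nsmul_eq_zero _))
  have hcard : L.relIndex N = Nat.card (N ⧸ L.addSubgroupOf N) := rfl
  have hdvd : ∀ i, q i ∣ L.relIndex N := by
    intro i
    rw [hcard]
    have h5 := addOrderOf_dvd_natCard
      (QuotientAddGroup.mk (⟨e i, heN i⟩ : N) : N ⧸ L.addSubgroupOf N)
    rw [horder i] at h5
    exact (dvd_mul_left (q i) m).trans h5
  refine ⟨?_, hdvd, ?_⟩
  · rw [hcard]
    exact Nat.card_ne_zero.mpr ⟨inferInstance, hfin⟩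
  · rintro p hp ⟨j, hpj⟩
    haveI : Fact p.Prime := ⟨hp⟩
    haveI : Fintype (N ⧸ L.addSubgroupOf N) := Fintype.ofFinite _
    refine exists_prime_addOrderOf_dvd_card p ?_
    rw [← Nat.card_eq_fintype_card, ← hcard]
    exact hpj.trans (hdvd j)
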